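/- Let a, b, c ≥ 1 be integers with gcd(a,b) = 1, let ν ∈ ℤ with gcd(ν, 2ab) = 1, and let d be an integer with d ≡ ν² (mod 4ab). Let l be a prime and x, y ∈ ℤ satisfy x² − d·y² = 4a²b²c², l ∣ x, l ∣ y, and 2ab·l ∣ x − νy. Then l² ∣ abc². -/
import Mathlib


/-- divisibility claim of Proposition 5.3.  Let `a, b, c ≥ 1` with
`gcd(a,b) = 1`, `ν` with `gcd(ν, 2ab) = 1`, and `d ≡ ν² (mod 4ab)`.  If a prime `l` and
integers `x, y` satisfy `x² − dy² = 4a²b²c²`, `l ∣ x`, `l ∣ y` and `2ab·l ∣ x − νy`,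
then `l² ∣ abc²`. -/
theorem nu_divisible_prime_sq_dvd
    (a b c : ℤ) (ha : 1 ≤ a) (hb : 1 ≤ b) (hc : 1 ≤ c)
    (hab : Int.gcd a b = 1) (ν d : ℤ)
    (hν : Int.gcd ν (2 * a * b) = 1)
    (hd : (4 * a * b) ∣ (d - ν ^ 2))
    (l : ℤ) (hl : Prime l) (x y : ℤ)
    (hxy : x ^ 2 - d * y ^ 2 = 4 * a ^ 2 * b ^ 2 * c ^ 2)
    (hlx : l ∣ x) (hly : l ∣ y)
    (hcong : (2 * a * b * l) ∣ (x - ν * y)) :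
    l ^ 2 ∣ a * b * c ^ 2 := by
  obtain ⟨x', rfl⟩ := hlx
  obtain ⟨y', rfl⟩ := hly
  obtain ⟨k, hk⟩ := hcong
  obtain ⟨e, he⟩ := hd
  have hl0 : l ≠ 0 := hl.ne_zero
  have hx' : x' - ν * y' = 2 * a * b * k := by
    have : l * (x' - ν * y') = l * (2 * a * b * k) := by linarith [hk]
    exact mul_left_cancel₀ hl0 this
  have hab0 : (4 * a * b : ℤ) ≠ 0 := by positivity
  refine ⟨k * (a * b * k + ν * y') - e * y' ^ 2, ?_⟩
  have key : 4 * a * b * (a * b * c ^ 2) =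
      4 * a * b * (l ^ 2 * (k * (a * b * k + ν * y') - e * y' ^ 2)) := by
    linear_combination -hxy - l ^ 2 * y' ^ 2 * he + l ^ 2 * (x' + ν * y' + 2 * a * b * k) * hx'
  exact mul_left_cancel₀ hab0 key
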